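/- The ten-tile slope gap pdf integrates to one: ∫₀^∞ f(t) dt = 1. -/

import Mathlib

/-- The inverse hyperbolic tangent. -/
noncomputable def artanh (x : ℝ) : ℝ := (1 / 2) * Real.log ((1 + x) / (1 - x))

/-- `θ(t) = artanh √(1 - 1/t)`. -/
noncomputable def tenTheta (t : ℝ) : ℝ := artanh (Real.sqrt (1 - 1 / t))

/-- The piecewise function `g` with `f(t) = (8/(33 t²)) g(t)` for `t ≥ 1`. -/
noncomputable def tenG (t : ℝ) : ℝ :=
  if t < 2 then 4 * Real.log t
  else if t < 3 then 12 * Real.log t - 8 * Real.log 2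
  else if t < 4 then 15 * Real.log t - 8 * Real.log 2 - 3 * Real.log 3
  else if t < 16 / 3 then
    16 * Real.log t - 10 * Real.log 2 - 3 * Real.log 3 - 8 * tenTheta (t / 4)
  else if t < 6 then
    16 * Real.log t - 10 * Real.log 2 - 3 * Real.log 3 - 8 * tenTheta (t / 4)
      - 4 * tenTheta (3 * t / 16)
  else if t < 8 then
    12 * Real.log t - 8 * Real.log 2 + Real.log 3 - 8 * tenTheta (t / 4)
      - 4 * tenTheta (t / 6)
  else if t < 9 then
    10 * Real.log t - 2 * Real.log 2 - Real.log 3 - 8 * tenTheta (t / 4)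
      - 12 * tenTheta (t / 8)
  else if t < 32 / 3 then
    10 * Real.log t - 4 * Real.log 2 - Real.log 3 - 8 * tenTheta (t / 4)
      - 8 * tenTheta (t / 8)
  else if t < 12 then
    10 * Real.log t - 4 * Real.log 2 - Real.log 3 - 8 * tenTheta (t / 4)
      - 8 * tenTheta (t / 8) - 4 * tenTheta (3 * t / 32)
  else if t < 16 then
    9 * Real.log t - 4 * Real.log 2 - 8 * tenTheta (t / 4) - 8 * tenTheta (t / 8)
      - 4 * tenTheta (t / 12)
  else
    9 * Real.log t - 4 * Real.log 2 - Real.log 3 - 8 * tenTheta (t / 4)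
      - 8 * tenTheta (t / 8) - 2 * tenTheta (t / 12)

/-- The slope gap distribution pdf of the balanced ten-tile origami. -/
noncomputable def tenTilePdf (t : ℝ) : ℝ :=
  if t < 1 then 0 else 8 / (33 * t ^ 2) * tenG t

open Real MeasureTheory Set Filter intervalIntegral

section TenAux

lemma artanh_hasDerivAt {x : ℝ} (h1 : -1 < x) (h2 : x < 1) :
    HasDerivAt _root_.artanh (1 / (1 - x ^ 2)) x := by
  have h1' : 0 < 1 + x := by linarith
  have h2' : 0 < 1 - x := by linarith
  have hA : HasDerivAt (fun y : ℝ => (1 / 2) * (Real.log (1 + y) - Real.log (1 - y)))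
      (1 / (1 - x ^ 2)) x := by
    have d1 : HasDerivAt (fun y : ℝ => Real.log (1 + y)) (1 / (1 + x)) x := by
      have h : HasDerivAt (fun y : ℝ => 1 + y) 1 x := (hasDerivAt_id x).const_add 1
      simpa [one_div, Function.comp_def] using (Real.hasDerivAt_log h1'.ne').comp x h
    have d2 : HasDerivAt (fun y : ℝ => Real.log (1 - y)) (-(1 / (1 - x))) x := by
      have h : HasDerivAt (fun y : ℝ => 1 - y) (-1) x := by
        exact (hasDerivAt_id x).const_sub 1
      simpa [one_div, Function.comp_def] using (Real.hasDerivAt_log h2'.ne').comp x h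
    have h := (d1.sub d2).const_mul (1 / 2 : ℝ)
    have e3 : 1 - x ^ 2 ≠ 0 := by nlinarith
    convert h using 1
    · rfl
    · rfl
    · rfl
    rw [show 1 - x ^ 2 = (1 + x) * (1 - x) by ring]
    field_simp
    ring
  refine hA.congr_of_eventuallyEq ?_
  filter_upwards [isOpen_Ioo.mem_nhds (show x ∈ Set.Ioo (-1 : ℝ) 1 from ⟨h1, h2⟩)] with y hy
  unfold _root_.artanh
  rw [Real.log_div (by linarith [hy.1]) (by linarith [hy.2])]

lemma artanh_continuousAt {x : ℝ} (h1 : -1 < x) (h2 : x < 1) : ContinuousAt _root_.artanh x :=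
  (artanh_hasDerivAt h1 h2).continuousAt

lemma tenTheta_comp (c t : ℝ) : tenTheta (t / c) = _root_.artanh (Real.sqrt (1 - c / t)) := by
  unfold tenTheta
  rw [one_div_div]

lemma tenTheta_eq {s : ℝ} (hs : 1 ≤ s) :
    tenTheta s = (1 / 2) * Real.log ((1 + Real.sqrt (1 - 1 / s)) ^ 2 * s) := by
  have hs0 : 0 < s := by linarith
  have hu : 0 ≤ 1 - 1 / s := by
    have : 1 / s ≤ 1 := by rw [div_le_one hs0]; linarith
    linarith
  set x := Real.sqrt (1 - 1 / s) with hxdef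
  have hx0 : 0 ≤ x := Real.sqrt_nonneg _
  have hx2 : x ^ 2 = 1 - 1 / s := Real.sq_sqrt hu
  have hx1 : x < 1 := by
    refine (Real.sqrt_lt' one_pos).mpr ?_
    have : 0 < 1 / s := by positivity
    nlinarith
  have h1mx : 1 - x = 1 / (s * (1 + x)) := by
    have h : (1 - x) * (1 + x) = 1 / s := by nlinarith [hx2]
    field_simp at h ⊢
    nlinarith [h]
  unfold tenTheta _root_.artanh
  rw [← hxdef, h1mx]
  have hne : s * (1 + x) ≠ 0 := by positivity
  rw [div_div_eq_mul_div, div_one]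
  congr 1
  ring

lemma tenTheta_nonneg {s : ℝ} (hs : 1 ≤ s) : 0 ≤ tenTheta s := by
  rw [tenTheta_eq hs]
  have h1 : (1 : ℝ) ≤ (1 + Real.sqrt (1 - 1 / s)) ^ 2 * s := by
    nlinarith [Real.sqrt_nonneg (1 - 1 / s)]
  have := Real.log_nonneg h1
  linarith

lemma tenTheta_le {s : ℝ} (hs : 1 ≤ s) : tenTheta s ≤ (1 / 2) * Real.log (4 * s) := by
  rw [tenTheta_eq hs]
  have hs0 : 0 < s := by linarith
  have hu : 0 ≤ 1 - 1 / s := by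
    have : 1 / s ≤ 1 := by rw [div_le_one hs0]; linarith
    linarith
  have hx1 : Real.sqrt (1 - 1 / s) ≤ 1 := by
    have h := Real.sqrt_le_sqrt (show 1 - 1 / s ≤ 1 by nlinarith [one_div_pos.mpr hs0])
    rwa [Real.sqrt_one] at h
  have hle : (1 + Real.sqrt (1 - 1 / s)) ^ 2 * s ≤ 4 * s := by
    nlinarith [mul_nonneg (mul_nonneg hs0.le (sub_nonneg.2 hx1))
      (by positivity : (0:ℝ) ≤ 3 + Real.sqrt (1 - 1 / s))]
  have hpos : 0 < (1 + Real.sqrt (1 - 1 / s)) ^ 2 * s := by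
    nlinarith [Real.sqrt_nonneg (1 - 1 / s)]
  have := Real.log_le_log hpos hle
  linarith

lemma tenTheta_one : tenTheta 1 = 0 := by
  unfold tenTheta _root_.artanh
  norm_num

lemma tenTheta_98 : tenTheta (9 / 8 : ℝ) = Real.log 2 / 2 := by
  unfold tenTheta _root_.artanh
  have h : (1 : ℝ) - 1 / (9 / 8) = (1 / 3) ^ 2 := by norm_num
  rw [h, Real.sqrt_sq (by norm_num)]
  norm_num
  ring

lemma tenTheta_43 : tenTheta (4 / 3 : ℝ) = Real.log 3 / 2 := by
  unfold tenTheta _root_.artanh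
  have h : (1 : ℝ) - 1 / (4 / 3) = (1 / 2) ^ 2 := by norm_num
  rw [h, Real.sqrt_sq (by norm_num)]
  norm_num
  ring

end TenAux
noncomputable def tenL (t : ℝ) : ℝ := -(Real.log t + 1) / t

noncomputable def tenTh (c t : ℝ) : ℝ :=
  -tenTheta (t / c) / t + Real.sqrt (1 - c / t) / c

noncomputable def tenF (A B k1 c1 k2 c2 k3 c3 t : ℝ) : ℝ :=
  8 / 33 * (A * tenL t - B * t⁻¹ + k1 * tenTh c1 t + k2 * tenTh c2 t + k3 * tenTh c3 t)

lemma one_sub_div_hasDerivAt {c t : ℝ} (ht : t ≠ 0) :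
    HasDerivAt (fun u : ℝ => 1 - c / u) (c / t ^ 2) t := by
  have h : HasDerivAt (fun u : ℝ => c / u) (-(c / t ^ 2)) t := by
    have := (hasDerivAt_inv ht).const_mul c
    simpa [div_eq_mul_inv, neg_div, mul_comm] using this
  simpa using h.const_sub 1

lemma one_sub_div_pos {c t : ℝ} (hc : 0 < c) (ht : c < t) : 0 < 1 - c / t := by
  have ht0 : 0 < t := hc.trans ht
  rw [sub_pos, div_lt_one ht0]
  exact ht

lemma sqrt_one_sub_div_lt_one {c t : ℝ} (hc : 0 < c) (ht : c ≤ t) :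
    Real.sqrt (1 - c / t) < 1 := by
  have ht0 : 0 < t := lt_of_lt_of_le hc ht
  refine (Real.sqrt_lt' one_pos).mpr ?_
  have : 0 < c / t := div_pos hc ht0
  nlinarith

lemma tenTheta_comp_hasDerivAt {c t : ℝ} (hc : 0 < c) (ht : c < t) :
    HasDerivAt (fun u => tenTheta (u / c)) (1 / (2 * t * Real.sqrt (1 - c / t))) t := by
  have ht0 : 0 < t := hc.trans ht
  have hu : 0 < 1 - c / t := one_sub_div_pos hc ht
  have hx0 : 0 < Real.sqrt (1 - c / t) := Real.sqrt_pos.mpr hu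
  have hx1 : Real.sqrt (1 - c / t) < 1 := sqrt_one_sub_div_lt_one hc ht.le
  have hfun : (fun u => tenTheta (u / c)) = fun u => _root_.artanh (Real.sqrt (1 - c / u)) :=
    funext fun u => tenTheta_comp c u
  rw [hfun]
  have dinner : HasDerivAt (fun u : ℝ => 1 - c / u) (c / t ^ 2) t :=
    one_sub_div_hasDerivAt ht0.ne'
  have dsqrt := (Real.hasDerivAt_sqrt hu.ne').comp t dinner
  have datanh := (artanh_hasDerivAt (by linarith : (-1:ℝ) < Real.sqrt (1 - c / t)) hx1).comp
    t dsqrt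
  have hx2 : Real.sqrt (1 - c / t) ^ 2 = 1 - c / t := Real.sq_sqrt hu.le
  have e1 : Real.sqrt (1 - c / t) ≠ 0 := hx0.ne'
  have e2 : t ≠ 0 := ht0.ne'
  have e3 : c ≠ 0 := hc.ne'
  set y := Real.sqrt (1 - c / t) with hy
  convert datanh using 1
  · rfl
  · rfl
  · rfl
  rw [hx2]
  field_simp
  ring_nf
  field_simp

lemma tenTheta_comp_continuousAt {c t : ℝ} (hc : 0 < c) (ht : c ≤ t) :
    ContinuousAt (fun u => tenTheta (u / c)) t := by
  have ht0 : 0 < t := lt_of_lt_of_le hc ht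
  have hfun : (fun u => tenTheta (u / c)) = fun u => _root_.artanh (Real.sqrt (1 - c / u)) :=
    funext fun u => tenTheta_comp c u
  rw [hfun]
  have hinner : ContinuousAt (fun u : ℝ => Real.sqrt (1 - c / u)) t :=
    Real.continuous_sqrt.continuousAt.comp
      (continuousAt_const.sub (continuousAt_const.div continuousAt_id ht0.ne'))
  have h := ContinuousAt.comp (x := t) (g := _root_.artanh)
    (artanh_continuousAt
      (by linarith [Real.sqrt_nonneg (1 - c / t)] : (-1:ℝ) < Real.sqrt (1 - c / t))
      (sqrt_one_sub_div_lt_one hc ht)) hinner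
  simpa [Function.comp_def] using h

lemma tenTh_continuousAt {c t : ℝ} (hc : 0 < c) (ht : c ≤ t) :
    ContinuousAt (tenTh c) t := by
  have ht0 : 0 < t := lt_of_lt_of_le hc ht
  unfold tenTh
  exact (((tenTheta_comp_continuousAt hc ht).neg.div continuousAt_id ht0.ne').add
    (((Real.continuous_sqrt.continuousAt.comp
      (continuousAt_const.sub (continuousAt_const.div continuousAt_id ht0.ne'))).div_const c))
    )

lemma tenL_continuousAt {t : ℝ} (ht : 0 < t) : ContinuousAt tenL t := by
  unfold tenL
  exact ((Real.continuousAt_log ht.ne').add continuousAt_const).neg.div continuousAt_id ht.ne'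

lemma tenL_hasDerivAt {t : ℝ} (ht : 0 < t) :
    HasDerivAt tenL (Real.log t / t ^ 2) t := by
  have h := (((Real.hasDerivAt_log ht.ne').add_const 1).neg.div (hasDerivAt_id t) ht.ne')
  have hfun : tenL = fun u => -(Real.log u + 1) / u := rfl
  rw [hfun]
  convert h using 1
  · rfl
  · rfl
  · rfl
  simp only [id_eq, Pi.neg_apply]
  field_simp
  try ring

lemma tenTh_hasDerivAt {c t : ℝ} (hc : 0 < c) (ht : c < t) :
    HasDerivAt (tenTh c) (tenTheta (t / c) / t ^ 2) t := by
  have ht0 : 0 < t := hc.trans ht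
  have hu : 0 < 1 - c / t := one_sub_div_pos hc ht
  have hx0 : 0 < Real.sqrt (1 - c / t) := Real.sqrt_pos.mpr hu
  have d1 := ((tenTheta_comp_hasDerivAt hc ht).neg).div (hasDerivAt_id t) ht0.ne'
  have d2 := ((Real.hasDerivAt_sqrt hu.ne').comp t (one_sub_div_hasDerivAt ht0.ne')).div_const c
  have h := d1.add d2
  have hfun : tenTh c = fun u => -tenTheta (u / c) / u + Real.sqrt (1 - c / u) / c := rfl
  rw [hfun]
  have e1 : Real.sqrt (1 - c / t) ≠ 0 := hx0.ne'
  have e2 : t ≠ 0 := ht0.ne'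
  have e3 : c ≠ 0 := hc.ne'
  set y := Real.sqrt (1 - c / t) with hy
  convert h using 1
  · rfl
  · rfl
  · rfl
  simp only [id_eq, Pi.neg_apply]
  field_simp
  ring

lemma tenF_hasDerivAt {A B k1 c1 k2 c2 k3 c3 t : ℝ}
    (h1 : 0 < c1) (h2 : 0 < c2) (h3 : 0 < c3)
    (ht1 : c1 < t) (ht2 : c2 < t) (ht3 : c3 < t) :
    HasDerivAt (tenF A B k1 c1 k2 c2 k3 c3)
      (8 / (33 * t ^ 2) * (A * Real.log t + B + k1 * tenTheta (t / c1)
        + k2 * tenTheta (t / c2) + k3 * tenTheta (t / c3))) t := by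
  have ht0 : 0 < t := h1.trans ht1
  have d := (((((tenL_hasDerivAt ht0).const_mul A).sub
      ((hasDerivAt_inv ht0.ne').const_mul B)).add
      ((tenTh_hasDerivAt h1 ht1).const_mul k1)).add
      ((tenTh_hasDerivAt h2 ht2).const_mul k2)).add
      ((tenTh_hasDerivAt h3 ht3).const_mul k3)
  have h := d.const_mul (8 / 33 : ℝ)
  have hfun : tenF A B k1 c1 k2 c2 k3 c3 = fun u =>
      8 / 33 * (A * tenL u - B * u⁻¹ + k1 * tenTh c1 u + k2 * tenTh c2 u + k3 * tenTh c3 u) :=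
    rfl
  rw [hfun]
  convert h using 1
  · rfl
  · rfl
  · rfl
  field_simp
  try ring
lemma ten_piece {a b A B k1 c1 k2 c2 k3 c3 : ℝ} (hab : a < b) (ha : 1 ≤ a)
    (h1 : 0 < c1) (h1a : c1 ≤ a) (h2 : 0 < c2) (h2a : c2 ≤ a) (h3 : 0 < c3) (h3a : c3 ≤ a)
    (hg : ∀ x ∈ Set.Ioo a b, tenG x
      = A * Real.log x + B + k1 * tenTheta (x / c1) + k2 * tenTheta (x / c2)
        + k3 * tenTheta (x / c3)) :
    IntervalIntegrable tenTilePdf volume a b ∧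
      ∫ x in a..b, tenTilePdf x
        = tenF A B k1 c1 k2 c2 k3 c3 b - tenF A B k1 c1 k2 c2 k3 c3 a := by
  have ha0 : 0 < a := lt_of_lt_of_le one_pos ha
  set φ : ℝ → ℝ := fun x => 8 / (33 * x ^ 2) * (A * Real.log x + B + k1 * tenTheta (x / c1)
      + k2 * tenTheta (x / c2) + k3 * tenTheta (x / c3)) with hφ
  have hEq : ∀ x ∈ Set.Ioo a b, tenTilePdf x = φ x := by
    intro x hx
    have hx1 : ¬ x < 1 := not_lt.2 (le_trans ha hx.1.le)
    rw [tenTilePdf, if_neg hx1, hg x hx]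
  have hφcont : ContinuousOn φ (Set.Icc a b) := by
    intro x hx
    have hx0 : 0 < x := lt_of_lt_of_le ha0 hx.1
    refine ContinuousAt.continuousWithinAt ?_
    refine ContinuousAt.mul
      (continuousAt_const.div (continuousAt_const.mul (continuousAt_id.pow 2))
        (by positivity)) ?_
    exact (((((Real.continuousAt_log hx0.ne').const_mul A).add continuousAt_const).add
      ((tenTheta_comp_continuousAt h1 (le_trans h1a hx.1)).const_mul k1)).add
      ((tenTheta_comp_continuousAt h2 (le_trans h2a hx.1)).const_mul k2)).add
      ((tenTheta_comp_continuousAt h3 (le_trans h3a hx.1)).const_mul k3)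
  have hφint : IntervalIntegrable φ volume a b :=
    hφcont.intervalIntegrable_of_Icc hab.le
  have hb : ∀ᵐ x : ℝ, x ≠ b := by
    rw [ae_iff]
    simp only [not_not, Set.setOf_eq_eq_singleton]
    exact measure_singleton b
  have hint : IntervalIntegrable tenTilePdf volume a b := by
    rw [intervalIntegrable_iff_integrableOn_Ioc_of_le hab.le]
    rw [intervalIntegrable_iff_integrableOn_Ioc_of_le hab.le] at hφint
    refine hφint.congr ?_
    filter_upwards [self_mem_ae_restrict measurableSet_Ioc,
      Filter.Eventually.filter_mono (MeasureTheory.ae_mono Measure.restrict_le_self) hb]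
      with x hx hxb
    exact (hEq x ⟨hx.1, lt_of_le_of_ne hx.2 hxb⟩).symm
  refine ⟨hint, ?_⟩
  have hcongr : ∫ x in a..b, tenTilePdf x = ∫ x in a..b, φ x := by
    refine intervalIntegral.integral_congr_ae' ?_ ?_
    · filter_upwards [hb] with x hxb hmem
      exact hEq x ⟨hmem.1, lt_of_le_of_ne hmem.2 hxb⟩
    · filter_upwards with x hmem
      exact absurd (hmem.1.trans_le hmem.2) (asymm hab)
  rw [hcongr]
  refine intervalIntegral.integral_eq_sub_of_hasDeriv_right_of_le hab.le ?_ ?_ hφint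
  · intro x hx
    have hx0 : 0 < x := lt_of_lt_of_le ha0 hx.1
    refine ContinuousAt.continuousWithinAt ?_
    have hfun : tenF A B k1 c1 k2 c2 k3 c3 = fun t =>
        8 / 33 * (A * tenL t - B * t⁻¹ + k1 * tenTh c1 t + k2 * tenTh c2 t + k3 * tenTh c3 t) :=
      rfl
    rw [hfun]
    have hc2 := (((((tenL_continuousAt hx0).const_mul A).sub
      ((continuousAt_inv₀ hx0.ne').const_mul B)).add
      ((tenTh_continuousAt h1 (le_trans h1a hx.1)).const_mul k1)).add
      ((tenTh_continuousAt h2 (le_trans h2a hx.1)).const_mul k2)).add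
      ((tenTh_continuousAt h3 (le_trans h3a hx.1)).const_mul k3)
    exact hc2.const_mul (8 / 33 : ℝ)
  · intro x hx
    exact ((tenF_hasDerivAt h1 h2 h3 (lt_of_le_of_lt h1a hx.1) (lt_of_le_of_lt h2a hx.1)
      (lt_of_le_of_lt h3a hx.1)).hasDerivWithinAt)
open Topology
lemma ten_theta_div_tendsto {c : ℝ} (hc : 0 < c) :
    Tendsto (fun t : ℝ => tenTheta (t / c) / t) atTop (𝓝 0) := by
  have hlog : Tendsto (fun t : ℝ => Real.log t / t) atTop (𝓝 0) := by
    have h := Real.isLittleO_log_id_atTop.tendsto_div_nhds_zero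
    simpa using h
  have hinv : Tendsto (fun t : ℝ => t⁻¹) atTop (𝓝 0) := tendsto_inv_atTop_zero
  have hub : Tendsto (fun t : ℝ => 1 / 2 * (Real.log (4 / c) + Real.log t) / t)
      atTop (𝓝 0) := by
    have h := ((hinv.const_mul (1 / 2 * Real.log (4 / c))).add (hlog.const_mul (1 / 2)))
    simp only [add_zero, mul_zero] at h
    refine h.congr fun t => by ring
  refine tendsto_of_tendsto_of_tendsto_of_le_of_le' tendsto_const_nhds hub ?_ ?_
  · filter_upwards [eventually_ge_atTop c, eventually_gt_atTop (0:ℝ)] with t htc ht0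
    have h1 : (1:ℝ) ≤ t / c := (one_le_div hc).mpr htc
    exact div_nonneg (tenTheta_nonneg h1) ht0.le
  · filter_upwards [eventually_ge_atTop c, eventually_gt_atTop (0:ℝ)] with t htc ht0
    have h1 : (1:ℝ) ≤ t / c := (one_le_div hc).mpr htc
    have h2 := tenTheta_le h1
    have h3 : Real.log (4 * (t / c)) = Real.log (4 / c) + Real.log t := by
      rw [show (4:ℝ) * (t / c) = 4 / c * t by ring,
        Real.log_mul (by positivity) ht0.ne']
    rw [h3] at h2
    exact (div_le_div_iff_of_pos_right ht0).mpr h2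
lemma tenL_tendsto : Tendsto tenL atTop (𝓝 0) := by
  have hlog : Tendsto (fun t : ℝ => Real.log t / t) atTop (𝓝 0) := by
    simpa using Real.isLittleO_log_id_atTop.tendsto_div_nhds_zero
  have hinv : Tendsto (fun t : ℝ => 1 / t) atTop (𝓝 (0:ℝ)) := by
    simpa using (tendsto_inv_atTop_zero (𝕜 := ℝ))
  have h := (hlog.add hinv).neg
  simp only [add_zero, neg_zero] at h
  refine h.congr fun t => ?_
  show -(Real.log t / t + 1 / t) = tenL t
  unfold tenL
  ring

lemma tenTh_tendsto {c : ℝ} (hc : 0 < c) : Tendsto (tenTh c) atTop (𝓝 c⁻¹) := by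
  have h1 := (ten_theta_div_tendsto hc).neg
  have hsq : Tendsto (fun t : ℝ => Real.sqrt (1 - c / t) / c) atTop (𝓝 c⁻¹) := by
    have hin : Tendsto (fun t : ℝ => 1 - c / t) atTop (𝓝 1) := by
      have h := (tendsto_inv_atTop_zero (𝕜 := ℝ)).const_mul c
      have h2 := (tendsto_const_nhds (x := (1:ℝ)) (f := atTop)).sub h
      simp only [mul_zero, sub_zero] at h2
      refine h2.congr fun t => by ring
    have h3 := (Real.continuous_sqrt.continuousAt (x := (1:ℝ))).tendsto.comp hin
    rw [Real.sqrt_one] at h3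
    have h4 := h3.div_const c
    simpa [one_div] using h4
  have h := h1.add hsq
  simp only [neg_zero, zero_add] at h
  refine h.congr fun t => ?_
  show -(tenTheta (t / c) / t) + Real.sqrt (1 - c / t) / c = tenTh c t
  unfold tenTh
  ring

lemma tenG_ge16 {x : ℝ} (hx : 16 ≤ x) :
    tenG x = 9 * Real.log x - 4 * Real.log 2 - Real.log 3 - 8 * tenTheta (x / 4)
      - 8 * tenTheta (x / 8) - 2 * tenTheta (x / 12) := by
  unfold tenG
  rw [if_neg (by linarith), if_neg (by linarith), if_neg (by linarith), if_neg (by linarith),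
    if_neg (by linarith), if_neg (by linarith), if_neg (by linarith), if_neg (by linarith),
    if_neg (by linarith), if_neg (by linarith)]

lemma pdf_ge16 {x : ℝ} (hx : 16 < x) :
    tenTilePdf x = 8 / (33 * x ^ 2) * (9 * Real.log x - 4 * Real.log 2 - Real.log 3
      - 8 * tenTheta (x / 4) - 8 * tenTheta (x / 8) - 2 * tenTheta (x / 12)) := by
  rw [tenTilePdf, if_neg (by linarith), tenG_ge16 hx.le]

lemma pdf_nonneg_ge16 {x : ℝ} (hx : 16 < x) : 0 ≤ tenTilePdf x := by
  rw [pdf_ge16 hx]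
  have hx0 : (0:ℝ) < x := by linarith
  have b4 : tenTheta (x / 4) ≤ 1 / 2 * Real.log x := by
    have h := tenTheta_le (s := x / 4) ((one_le_div (by norm_num)).mpr (by linarith))
    rwa [show (4:ℝ) * (x / 4) = x by ring] at h
  have b8 : tenTheta (x / 8) ≤ 1 / 2 * (Real.log x - Real.log 2) := by
    have h := tenTheta_le (s := x / 8) ((one_le_div (by norm_num)).mpr (by linarith))
    rwa [show (4:ℝ) * (x / 8) = x / 2 by ring, Real.log_div hx0.ne' (by norm_num)] at h
  have b12 : tenTheta (x / 12) ≤ 1 / 2 * (Real.log x - Real.log 3) := by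
    have h := tenTheta_le (s := x / 12) ((one_le_div (by norm_num)).mpr (by linarith))
    rwa [show (4:ℝ) * (x / 12) = x / 3 by ring, Real.log_div hx0.ne' (by norm_num)] at h
  apply mul_nonneg (by positivity)
  linarith

lemma ten_tail :
    IntegrableOn tenTilePdf (Set.Ioi (16:ℝ)) volume ∧
    ∫ x in Set.Ioi (16:ℝ), tenTilePdf x
      = 8 / 33 * (-19 / 6) - tenF 9 (-4 * Real.log 2 - Real.log 3) (-8) 4 (-8) 8 (-2) 12 16 := by
  set B : ℝ := -4 * Real.log 2 - Real.log 3 with hB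
  set F := tenF 9 B (-8) 4 (-8) 8 (-2) 12 with hFdef
  have hfun : F = fun t =>
      8 / 33 * (9 * tenL t - B * t⁻¹ + (-8) * tenTh 4 t + (-8) * tenTh 8 t
        + (-2) * tenTh 12 t) := rfl
  have hcont : ContinuousWithinAt F (Set.Ici (16:ℝ)) 16 := by
    apply ContinuousAt.continuousWithinAt
    rw [hfun]
    have hc2 := (((((tenL_continuousAt (by norm_num : (0:ℝ) < 16)).const_mul 9).sub
      ((continuousAt_inv₀ (by norm_num : (16:ℝ) ≠ 0)).const_mul B)).add
      ((tenTh_continuousAt (by norm_num : (0:ℝ) < 4) (by norm_num)).const_mul (-8))).add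
      ((tenTh_continuousAt (by norm_num : (0:ℝ) < 8) (by norm_num)).const_mul (-8))).add
      ((tenTh_continuousAt (by norm_num : (0:ℝ) < 12) (by norm_num)).const_mul (-2))
    exact hc2.const_mul (8 / 33 : ℝ)
  have hderiv : ∀ x ∈ Set.Ioi (16:ℝ), HasDerivAt F (tenTilePdf x) x := by
    intro x hx
    have hx16 : (16:ℝ) < x := hx
    have h := tenF_hasDerivAt (A := 9) (B := B) (k1 := -8) (c1 := 4) (k2 := -8) (c2 := 8)
      (k3 := -2) (c3 := 12) (t := x) (by norm_num) (by norm_num) (by norm_num)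
      (by linarith) (by linarith) (by linarith)
    rw [pdf_ge16 hx16]
    convert h using 1
    rw [hB]
    ring
  have hpos : ∀ x ∈ Set.Ioi (16:ℝ), 0 ≤ tenTilePdf x := fun x hx => pdf_nonneg_ge16 hx
  have htends : Tendsto F atTop (𝓝 (8 / 33 * (-19 / 6))) := by
    rw [hfun]
    have h := ((((((tenL_tendsto).const_mul 9).sub
      ((tendsto_inv_atTop_zero (𝕜 := ℝ)).const_mul B)).add
      ((tenTh_tendsto (by norm_num : (0:ℝ) < 4)).const_mul (-8))).add
      ((tenTh_tendsto (by norm_num : (0:ℝ) < 8)).const_mul (-8))).add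
      ((tenTh_tendsto (by norm_num : (0:ℝ) < 12)).const_mul (-2))).const_mul (8 / 33 : ℝ)
    convert h using 2
    norm_num
  exact ⟨integrableOn_Ioi_deriv_of_nonneg hcont hderiv hpos htends,
    integral_Ioi_of_hasDerivAt_of_nonneg hcont hderiv hpos htends⟩
lemma ten_zero_piece :
    IntervalIntegrable tenTilePdf volume 0 1 ∧ ∫ x in (0:ℝ)..1, tenTilePdf x = 0 := by
  have hEq : ∀ x ∈ Set.Ioc (0:ℝ) 1, tenTilePdf x = 0 := by
    intro x hx
    rw [tenTilePdf]
    rcases lt_or_ge x 1 with h | h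
    · rw [if_pos h]
    · have hx1 : x = 1 := le_antisymm hx.2 h
      rw [if_neg (not_lt.2 h), hx1]
      unfold tenG
      rw [if_pos (by norm_num)]
      simp
  constructor
  · rw [intervalIntegrable_iff_integrableOn_Ioc_of_le (by norm_num)]
    refine (integrable_zero _ _ _).congr ?_
    filter_upwards [self_mem_ae_restrict measurableSet_Ioc] with x hx
    exact (hEq x hx).symm
  · rw [intervalIntegral.integral_of_le (by norm_num)]
    rw [MeasureTheory.setIntegral_congr_fun measurableSet_Ioc hEq]
    simp

lemma sqrt_nine : Real.sqrt (9 : ℝ) = 3 := by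
  rw [show (9 : ℝ) = 3 ^ 2 by norm_num, Real.sqrt_sq (by norm_num)]

lemma sqrt_four : Real.sqrt (4 : ℝ) = 2 := by
  rw [show (4 : ℝ) = 2 ^ 2 by norm_num, Real.sqrt_sq (by norm_num)]

lemma ten_log4 : Real.log 4 = 2 * Real.log 2 := by
  rw [show (4:ℝ) = 2 ^ 2 by norm_num, Real.log_pow]; push_cast; ring

lemma ten_log8 : Real.log 8 = 3 * Real.log 2 := by
  rw [show (8:ℝ) = 2 ^ 3 by norm_num, Real.log_pow]; push_cast; ring

lemma ten_log16 : Real.log 16 = 4 * Real.log 2 := by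
  rw [show (16:ℝ) = 2 ^ 4 by norm_num, Real.log_pow]; push_cast; ring

lemma ten_log32 : Real.log 32 = 5 * Real.log 2 := by
  rw [show (32:ℝ) = 2 ^ 5 by norm_num, Real.log_pow]; push_cast; ring

lemma ten_log9 : Real.log 9 = 2 * Real.log 3 := by
  rw [show (9:ℝ) = 3 ^ 2 by norm_num, Real.log_pow]; push_cast; ring

lemma ten_log6 : Real.log 6 = Real.log 2 + Real.log 3 := by
  rw [show (6:ℝ) = 2 * 3 by norm_num, Real.log_mul (by norm_num) (by norm_num)]

lemma ten_log12 : Real.log 12 = 2 * Real.log 2 + Real.log 3 := by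
  rw [show (12:ℝ) = 4 * 3 by norm_num, Real.log_mul (by norm_num) (by norm_num), ten_log4]

lemma ten_log163 : Real.log (16 / 3 : ℝ) = 4 * Real.log 2 - Real.log 3 := by
  rw [Real.log_div (by norm_num) (by norm_num), ten_log16]

lemma ten_log323 : Real.log (32 / 3 : ℝ) = 5 * Real.log 2 - Real.log 3 := by
  rw [Real.log_div (by norm_num) (by norm_num), ten_log32]
theorem tenTile_integral_eq_one' : ∫ t in Set.Ioi (0 : ℝ), tenTilePdf t = 1 := by
  obtain ⟨i0, e0⟩ := ten_zero_piece
  obtain ⟨i1, e1⟩ := ten_piece (a:=1) (b:=2) (A:=4) (B:=0) (k1:=0) (c1:=1) (k2:=0) (c2:=1)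
    (k3:=0) (c3:=1) (by norm_num) le_rfl one_pos le_rfl one_pos le_rfl one_pos le_rfl
    (by intro x hx; obtain ⟨hxa, hxb⟩ := hx
        unfold tenG; rw [if_pos (by linarith)]; ring)
  obtain ⟨i2, e2⟩ := ten_piece (a:=2) (b:=3) (A:=12) (B:=-8 * Real.log 2) (k1:=0) (c1:=1)
    (k2:=0) (c2:=1) (k3:=0) (c3:=1) (by norm_num) (by norm_num) one_pos (by norm_num)
    one_pos (by norm_num) one_pos (by norm_num)
    (by intro x hx; obtain ⟨hxa, hxb⟩ := hx
        unfold tenG; rw [if_neg (by linarith), if_pos (by linarith)]; ring)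
  obtain ⟨i3, e3⟩ := ten_piece (a:=3) (b:=4) (A:=15) (B:=-8 * Real.log 2 - 3 * Real.log 3)
    (k1:=0) (c1:=1) (k2:=0) (c2:=1) (k3:=0) (c3:=1) (by norm_num) (by norm_num) one_pos
    (by norm_num) one_pos (by norm_num) one_pos (by norm_num)
    (by intro x hx; obtain ⟨hxa, hxb⟩ := hx
        unfold tenG; rw [if_neg (by linarith), if_neg (by linarith), if_pos (by linarith)]
        ring)
  obtain ⟨i4, e4⟩ := ten_piece (a:=4) (b:=16/3) (A:=16) (B:=-10 * Real.log 2 - 3 * Real.log 3)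
    (k1:=-8) (c1:=4) (k2:=0) (c2:=1) (k3:=0) (c3:=1) (by norm_num) (by norm_num)
    (by norm_num) (by norm_num) one_pos (by norm_num) one_pos (by norm_num)
    (by intro x hx; obtain ⟨hxa, hxb⟩ := hx
        unfold tenG
        rw [if_neg (by linarith), if_neg (by linarith), if_neg (by linarith),
          if_pos (by linarith)]
        ring)
  obtain ⟨i5, e5⟩ := ten_piece (a:=16/3) (b:=6) (A:=16) (B:=-10 * Real.log 2 - 3 * Real.log 3)
    (k1:=-8) (c1:=4) (k2:=-4) (c2:=16/3) (k3:=0) (c3:=1) (by norm_num) (by norm_num)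
    (by norm_num) (by norm_num) (by norm_num) (by norm_num) one_pos (by norm_num)
    (by intro x hx; obtain ⟨hxa, hxb⟩ := hx
        unfold tenG
        rw [if_neg (by linarith), if_neg (by linarith), if_neg (by linarith),
          if_neg (by linarith), if_pos (by linarith)]
        rw [show x / (16/3 : ℝ) = 3 * x / 16 by ring]
        ring)
  obtain ⟨i6, e6⟩ := ten_piece (a:=6) (b:=8) (A:=12) (B:=-8 * Real.log 2 + Real.log 3)
    (k1:=-8) (c1:=4) (k2:=-4) (c2:=6) (k3:=0) (c3:=1) (by norm_num) (by norm_num)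
    (by norm_num) (by norm_num) (by norm_num) (by norm_num) one_pos (by norm_num)
    (by intro x hx; obtain ⟨hxa, hxb⟩ := hx
        unfold tenG
        rw [if_neg (by linarith), if_neg (by linarith), if_neg (by linarith),
          if_neg (by linarith), if_neg (by linarith), if_pos (by linarith)]
        ring)
  obtain ⟨i7, e7⟩ := ten_piece (a:=8) (b:=9) (A:=10) (B:=-2 * Real.log 2 - Real.log 3)
    (k1:=-8) (c1:=4) (k2:=-12) (c2:=8) (k3:=0) (c3:=1) (by norm_num) (by norm_num)
    (by norm_num) (by norm_num) (by norm_num) (by norm_num) one_pos (by norm_num)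
    (by intro x hx; obtain ⟨hxa, hxb⟩ := hx
        unfold tenG
        rw [if_neg (by linarith), if_neg (by linarith), if_neg (by linarith),
          if_neg (by linarith), if_neg (by linarith), if_neg (by linarith),
          if_pos (by linarith)]
        ring)
  obtain ⟨i8, e8⟩ := ten_piece (a:=9) (b:=32/3) (A:=10) (B:=-4 * Real.log 2 - Real.log 3)
    (k1:=-8) (c1:=4) (k2:=-8) (c2:=8) (k3:=0) (c3:=1) (by norm_num) (by norm_num)
    (by norm_num) (by norm_num) (by norm_num) (by norm_num) one_pos (by norm_num)
    (by intro x hx; obtain ⟨hxa, hxb⟩ := hx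
        unfold tenG
        rw [if_neg (by linarith), if_neg (by linarith), if_neg (by linarith),
          if_neg (by linarith), if_neg (by linarith), if_neg (by linarith),
          if_neg (by linarith), if_pos (by linarith)]
        ring)
  obtain ⟨i9, e9⟩ := ten_piece (a:=32/3) (b:=12) (A:=10) (B:=-4 * Real.log 2 - Real.log 3)
    (k1:=-8) (c1:=4) (k2:=-8) (c2:=8) (k3:=-4) (c3:=32/3) (by norm_num) (by norm_num)
    (by norm_num) (by norm_num) (by norm_num) (by norm_num) (by norm_num) (by norm_num)
    (by intro x hx; obtain ⟨hxa, hxb⟩ := hx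
        unfold tenG
        rw [if_neg (by linarith), if_neg (by linarith), if_neg (by linarith),
          if_neg (by linarith), if_neg (by linarith), if_neg (by linarith),
          if_neg (by linarith), if_neg (by linarith), if_pos (by linarith)]
        rw [show x / (32/3 : ℝ) = 3 * x / 32 by ring]
        ring)
  obtain ⟨i10, e10⟩ := ten_piece (a:=12) (b:=16) (A:=9) (B:=-4 * Real.log 2)
    (k1:=-8) (c1:=4) (k2:=-8) (c2:=8) (k3:=-4) (c3:=12) (by norm_num) (by norm_num)
    (by norm_num) (by norm_num) (by norm_num) (by norm_num) (by norm_num) (by norm_num)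
    (by intro x hx; obtain ⟨hxa, hxb⟩ := hx
        unfold tenG
        rw [if_neg (by linarith), if_neg (by linarith), if_neg (by linarith),
          if_neg (by linarith), if_neg (by linarith), if_neg (by linarith),
          if_neg (by linarith), if_neg (by linarith), if_neg (by linarith),
          if_pos (by linarith)]
        ring)
  obtain ⟨iT, eT⟩ := ten_tail
  -- cumulative integrability
  have c1 := i0.trans i1
  have c2 := c1.trans i2
  have c3 := c2.trans i3
  have c4 := c3.trans i4
  have c5 := c4.trans i5
  have c6 := c5.trans i6
  have c7 := c6.trans i7
  have c8 := c7.trans i8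
  have c9 := c8.trans i9
  have c10 := c9.trans i10
  have hIoc : IntegrableOn tenTilePdf (Set.Ioc (0:ℝ) 16) volume :=
    (intervalIntegrable_iff_integrableOn_Ioc_of_le (by norm_num)).1 c10
  have hsplit : ∫ x in Set.Ioi (0:ℝ), tenTilePdf x
      = (∫ x in Set.Ioc (0:ℝ) 16, tenTilePdf x) + ∫ x in Set.Ioi (16:ℝ), tenTilePdf x := by
    rw [← MeasureTheory.setIntegral_union (Set.Ioc_disjoint_Ioi le_rfl) measurableSet_Ioi
      hIoc iT, Set.Ioc_union_Ioi_eq_Ioi (by norm_num : (0:ℝ) ≤ 16)]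
  have hIocInt : ∫ x in Set.Ioc (0:ℝ) 16, tenTilePdf x
      = ∫ x in (0:ℝ)..16, tenTilePdf x :=
    (intervalIntegral.integral_of_le (by norm_num)).symm
  have key : ∫ x in (0:ℝ)..16, tenTilePdf x
      = (∫ x in (0:ℝ)..1, tenTilePdf x) + (∫ x in (1:ℝ)..2, tenTilePdf x)
        + (∫ x in (2:ℝ)..3, tenTilePdf x) + (∫ x in (3:ℝ)..4, tenTilePdf x)
        + (∫ x in (4:ℝ)..16/3, tenTilePdf x) + (∫ x in (16/3:ℝ)..6, tenTilePdf x)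
        + (∫ x in (6:ℝ)..8, tenTilePdf x) + (∫ x in (8:ℝ)..9, tenTilePdf x)
        + (∫ x in (9:ℝ)..32/3, tenTilePdf x) + (∫ x in (32/3:ℝ)..12, tenTilePdf x)
        + (∫ x in (12:ℝ)..16, tenTilePdf x) := by
    rw [intervalIntegral.integral_add_adjacent_intervals i0 i1,
      intervalIntegral.integral_add_adjacent_intervals c1 i2,
      intervalIntegral.integral_add_adjacent_intervals c2 i3,
      intervalIntegral.integral_add_adjacent_intervals c3 i4,
      intervalIntegral.integral_add_adjacent_intervals c4 i5,
      intervalIntegral.integral_add_adjacent_intervals c5 i6,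
      intervalIntegral.integral_add_adjacent_intervals c6 i7,
      intervalIntegral.integral_add_adjacent_intervals c7 i8,
      intervalIntegral.integral_add_adjacent_intervals c8 i9,
      intervalIntegral.integral_add_adjacent_intervals c9 i10]
  rw [hsplit, hIocInt, key, e0, e1, e2, e3, e4, e5, e6, e7, e8, e9, e10, eT]
  simp only [tenF, tenTh, tenL]
  norm_num
  rw [tenTheta_one, tenTheta_98, tenTheta_43,
    ten_log4, ten_log6, ten_log8, ten_log9, ten_log12, ten_log16, ten_log163, ten_log323]
  ring

open MeasureTheory in
/-- The ten-tile slope gap pdf integrates to one over `(0, ∞)`. -/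
theorem tenTile_integral_eq_one : ∫ t in Set.Ioi (0 : ℝ), tenTilePdf t = 1 :=
  tenTile_integral_eq_one'
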